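/- Let K and L be finite groups with a (K ⋊ L)-Frobenius algebra H (over a field of characteristic 0). Then the trace axiom descends to K-coinvariants: for all l₁, l₂ ∈ L and v in the K-coinvariants of the [l₁,l₂]-graded part, Tr on the K-coinvariants of ⊕_k H_{kl₁} of (left multiplication by v composed with ρ(l₂⁻¹)) equals Tr on the K-coinvariants of ⊕_k H_{kl₂} of (ρ(l₁) composed with left multiplication by v). -/

import Mathlib

/-!
STATEMENT 1: For a `(K ⋊ L)`-Frobenius algebra `H` (over a field of characteristic 0,
here `ℚ`), the trace axiom descends to `K`-coinvariants: for all `l₁, l₂ ∈ L` and `v`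
in the `K`-coinvariants of the `[l₁,l₂]`-graded part,
`Tr_{H^K_{[l₁]}} (L_v ∘ ρ(l₂⁻¹)) = Tr_{H^K_{[l₂]}} (ρ(l₁) ∘ L_v)`.
The `K`-coinvariants `H^K_{[l]}` are the image of `⊕_{k ∈ K} H_{k·l}` under the
averaging map `π_K = (1/|K|) ∑_{k} ρ(k)`.  All the axioms of a (ℚ-graded aside)
`G`-Frobenius algebra for `G = K ⋊[φ] L` are listed as hypotheses.
-/

open SemidirectProduct
open scoped commutatorElement

section aux

variable {V : Type*} [AddCommGroup V] [Module ℚ V] [FiniteDimensional ℚ V]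

lemma trace_restrict_eq_trace (p : Submodule ℚ V) (f : V →ₗ[ℚ] V) (hf : ∀ x, f x ∈ p)
    (hf' : ∀ x ∈ p, f x ∈ p) :
    LinearMap.trace ℚ p (f.restrict hf') = LinearMap.trace ℚ V f := by
  have h1 : f.restrict hf' = (f.codRestrict p hf).comp p.subtype := by
    ext x; rfl
  have h2 : f = p.subtype.comp (f.codRestrict p hf) := rfl
  rw [h1, LinearMap.trace_comp_comm', ← h2]

variable {ι : Type*} (H : ι → Submodule ℚ V)

lemma ext_graded (hdecomp : ⨆ i, H i = ⊤) {f g : V →ₗ[ℚ] V}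
    (h : ∀ i, ∀ x ∈ H i, f x = g x) : f = g := by
  ext x
  have hx : x ∈ ⨆ i, H i := hdecomp ▸ Submodule.mem_top
  refine Submodule.iSup_induction (motive := fun x => f x = g x) H hx h (by simp) ?_
  intro y z hy hz; simp [map_add, hy, hz]

noncomputable def gradedProj [DecidableEq ι] (D : DirectSum.IsInternal H)
    (p : ι → Prop) [DecidablePred p] : V →ₗ[ℚ] V :=
  (DirectSum.toModule ℚ ι V (fun i => if p i then (H i).subtype else 0)) ∘ₗ
    ((LinearEquiv.ofBijective (DirectSum.coeLinearMap H) D).symm.toLinearMap)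

lemma gradedProj_apply_of_mem [DecidableEq ι] (D : DirectSum.IsInternal H)
    (p : ι → Prop) [DecidablePred p] {i : ι} {x : V} (hx : x ∈ H i) :
    gradedProj H D p x = if p i then x else 0 := by
  have he : (LinearEquiv.ofBijective (DirectSum.coeLinearMap H) D).symm x
      = DirectSum.lof ℚ ι (fun i => H i) i ⟨x, hx⟩ := by
    apply (LinearEquiv.ofBijective (DirectSum.coeLinearMap H) D).injective
    rw [LinearEquiv.apply_symm_apply]
    exact (DirectSum.coeLinearMap_of H i ⟨x, hx⟩).symm
  rw [gradedProj, LinearMap.comp_apply, LinearEquiv.coe_coe, he, DirectSum.toModule_lof]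
  split_ifs <;> simp

lemma gradedProj_mem [DecidableEq ι] (D : DirectSum.IsInternal H)
    (hdecomp : ⨆ i, H i = ⊤)
    (p : ι → Prop) [DecidablePred p] (S : Submodule ℚ V)
    (hS : ∀ i, p i → H i ≤ S) (w : V) : gradedProj H D p w ∈ S := by
  have hw : w ∈ ⨆ i, H i := hdecomp ▸ Submodule.mem_top
  refine Submodule.iSup_induction (motive := fun w => gradedProj H D p w ∈ S) H hw ?_ (by simp) ?_
  · intro i x hx
    rw [gradedProj_apply_of_mem H D p hx]
    split_ifs with h
    · exact hS i h hx
    · simp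
  · intro y z hy hz; simp [map_add]; exact S.add_mem hy hz

end aux

section traceq
variable {V : Type*} [AddCommGroup V] [Module ℚ V] [FiniteDimensional ℚ V]
variable {ι : Type*} [DecidableEq ι] (H : ι → Submodule ℚ V) (D : DirectSum.IsInternal H)

lemma gradedProj_single_mem (hdecomp : ⨆ i, H i = ⊤) (i : ι) (w : V) : gradedProj H D (· = i) w ∈ H i := by
  refine gradedProj_mem H D hdecomp _ (H i) ?_ w
  rintro m rfl; exact le_rfl

lemma trace_comp_proj_diag (hdecomp : ⨆ i, H i = ⊤) (T : V →ₗ[ℚ] V) (i : ι)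
    (hmem : ∀ w ∈ H i, T w ∈ H i) :
    LinearMap.trace ℚ V (T ∘ₗ gradedProj H D (· = i))
      = LinearMap.trace ℚ (H i) (T.restrict hmem) := by
  set Q := gradedProj H D (· = i) with hQdef
  have hall : ∀ w, (T ∘ₗ Q) w ∈ H i := fun w => hmem _ (gradedProj_single_mem H D hdecomp i w)
  rw [← trace_restrict_eq_trace (H i) _ hall (fun x _ => hall x)]
  congr 1
  ext ⟨w, hw⟩
  simp only [LinearMap.restrict_apply, LinearMap.comp_apply]
  rw [hQdef, gradedProj_apply_of_mem H D _ hw, if_pos rfl]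

lemma trace_comp_proj_offdiag (hdecomp : ⨆ i, H i = ⊤) (T : V →ₗ[ℚ] V) (i j : ι)
    (hmem : ∀ w ∈ H i, T w ∈ H j) (hne : j ≠ i) :
    LinearMap.trace ℚ V (T ∘ₗ gradedProj H D (· = i)) = 0 := by
  set Q := gradedProj H D (· = i) with hQdef
  have hall : ∀ w, (T ∘ₗ Q) w ∈ H j :=
    fun w => hmem _ (gradedProj_single_mem H D hdecomp i w)
  rw [← trace_restrict_eq_trace (H j) _ hall (fun x _ => hall x)]
  have : (T ∘ₗ Q).restrict (p := H j) (q := H j) (fun x _ => hall x) = 0 := by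
    ext ⟨w, hw⟩
    simp only [LinearMap.restrict_apply, LinearMap.comp_apply]
    rw [hQdef, gradedProj_apply_of_mem H D _ hw, if_neg hne]
    simp
  rw [this, map_zero]

end traceq

theorem stmt1 {K L V : Type*} [Group K] [Group L] [Fintype K] [Fintype L]
    [AddCommGroup V] [Module ℚ V] [FiniteDimensional ℚ V]
    (φ : L →* MulAut K)
    (H : K ⋊[φ] L → Submodule ℚ V)
    (ρ : (K ⋊[φ] L) →* (V →ₗ[ℚ] V))
    (μ : V →ₗ[ℚ] V →ₗ[ℚ] V)
    (one : V) (η : V →ₗ[ℚ] V →ₗ[ℚ] ℚ)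
    -- `H` is a `(K ⋊ L)`-graded `(K ⋊ L)`-module:
    (hdecomp : ⨆ m, H m = ⊤)
    (hindep : iSupIndep H)
    (hgrad : ∀ (γ m : K ⋊[φ] L), ∀ v ∈ H m, ρ γ v ∈ H (γ⁻¹ * m * γ))
    -- self-invariance:
    (hself : ∀ γ : K ⋊[φ] L, ∀ v ∈ H γ, ρ γ v = v)
    -- graded multiplication, associativity, braided commutativity, equivariance:
    (hmulgrad : ∀ m₁ m₂ : K ⋊[φ] L, ∀ v₁ ∈ H m₁, ∀ v₂ ∈ H m₂, μ v₁ v₂ ∈ H (m₁ * m₂))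
    (hassoc : ∀ v₁ v₂ v₃ : V, μ (μ v₁ v₂) v₃ = μ v₁ (μ v₂ v₃))
    (hbraid : ∀ m₁ : K ⋊[φ] L, ∀ v₁ ∈ H m₁, ∀ v₂ : V, μ v₁ v₂ = μ (ρ m₁⁻¹ v₂) v₁)
    (hequiv : ∀ (γ : K ⋊[φ] L) (v₁ v₂ : V), μ (ρ γ v₁) (ρ γ v₂) = ρ γ (μ v₁ v₂))
    -- the metric axioms:
    (hmetsym : ∀ v w : V, η v w = η w v)
    (hmetgrad : ∀ m₁ m₂ : K ⋊[φ] L, m₁ * m₂ ≠ 1 →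
      ∀ v₁ ∈ H m₁, ∀ v₂ ∈ H m₂, η v₁ v₂ = 0)
    (hmetnondeg : ∀ v : V, (∀ w : V, η v w = 0) → v = 0)
    (hmetequiv : ∀ (γ : K ⋊[φ] L) (v w : V), η (ρ γ v) (ρ γ w) = η v w)
    (hmetinv : ∀ v₁ v₂ v₃ : V, η (μ v₁ v₂) v₃ = η v₁ (μ v₂ v₃))
    -- the `G`-invariant identity:
    (honemem : one ∈ H 1)
    (honel : ∀ v : V, μ one v = v) (honer : ∀ v : V, μ v one = v)
    (honeinv : ∀ γ : K ⋊[φ] L, ρ γ one = one)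
    -- the trace axiom for `H`:
    (htrace : ∀ a b : K ⋊[φ] L, ∀ v ∈ H ⁅a, b⁆,
      ∀ (h₁ : ∀ x ∈ H a, ((μ v).comp (ρ b⁻¹)) x ∈ H a)
        (h₂ : ∀ x ∈ H b, ((ρ a).comp (μ v)) x ∈ H b),
      LinearMap.trace ℚ (H a) (((μ v).comp (ρ b⁻¹)).restrict h₁)
        = LinearMap.trace ℚ (H b) (((ρ a).comp (μ v)).restrict h₂)) :
    -- Conclusion: the trace axiom for the `K`-coinvariants.
    ∀ l₁ l₂ : L,
      ∀ v ∈ Submodule.map ((Fintype.card K : ℚ)⁻¹ • ∑ k : K, ρ (inl k))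
          (⨆ k : K, H (inl k * inr ⁅l₁, l₂⁆)),
      ∀ (h₁ : ∀ x ∈ Submodule.map ((Fintype.card K : ℚ)⁻¹ • ∑ k : K, ρ (inl k))
            (⨆ k : K, H (inl k * inr l₁)),
          ((μ v).comp (ρ (inr l₂)⁻¹)) x
            ∈ Submodule.map ((Fintype.card K : ℚ)⁻¹ • ∑ k : K, ρ (inl k))
              (⨆ k : K, H (inl k * inr l₁)))
        (h₂ : ∀ x ∈ Submodule.map ((Fintype.card K : ℚ)⁻¹ • ∑ k : K, ρ (inl k))
            (⨆ k : K, H (inl k * inr l₂)),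
          ((ρ (inr l₁)).comp (μ v)) x
            ∈ Submodule.map ((Fintype.card K : ℚ)⁻¹ • ∑ k : K, ρ (inl k))
              (⨆ k : K, H (inl k * inr l₂))),
      LinearMap.trace ℚ
          (Submodule.map ((Fintype.card K : ℚ)⁻¹ • ∑ k : K, ρ (inl k))
            (⨆ k : K, H (inl k * inr l₁)))
          (((μ v).comp (ρ (inr l₂)⁻¹)).restrict h₁)
        = LinearMap.trace ℚ
          (Submodule.map ((Fintype.card K : ℚ)⁻¹ • ∑ k : K, ρ (inl k))
            (⨆ k : K, H (inl k * inr l₂)))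
          (((ρ (inr l₁)).comp (μ v)).restrict h₂) := by
  classical
  intro l₁ l₂ v hv h₁ h₂
  have D : DirectSum.IsInternal H :=
    DirectSum.isInternal_submodule_of_iSupIndep_of_iSup_eq_top hindep hdecomp
  set πK : V →ₗ[ℚ] V := (Fintype.card K : ℚ)⁻¹ • ∑ k : K, ρ (inl k) with hπK
  set c : ℚ := (Fintype.card K : ℚ)⁻¹ with hc
  have hcard : (Fintype.card K : ℚ) ≠ 0 := by
    exact_mod_cast Fintype.card_ne_zero
  -- basic π facts
  have hπapp : ∀ w : V, πK w = c • ∑ k : K, ρ (inl k) w := by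
    intro w; simp [hπK, LinearMap.sum_apply]
  have hrpi : ∀ (k : K) (w : V), ρ (inl k) (πK w) = πK w := by
    intro k w
    rw [hπapp, map_smul, map_sum]
    congr 1
    rw [← Equiv.sum_comp (Equiv.mulLeft k) (fun j => ρ (inl j) w)]
    refine Finset.sum_congr rfl fun j _ => ?_
    have : ρ (inl k) (ρ (inl j) w) = ρ (inl k * inl j) w := by
      rw [map_mul]; rfl
    rw [this]; simp [Equiv.mulLeft]
  have hpipi : ∀ w : V, πK (πK w) = πK w := by
    intro w
    rw [hπapp (πK w)]
    have : ∀ k : K, ρ (inl k) (πK w) = πK w := fun k => hrpi k w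
    rw [Finset.sum_congr rfl (fun k _ => this k), Finset.sum_const, Finset.card_univ]
    rw [← Nat.cast_smul_eq_nsmul ℚ, smul_smul, hc, inv_mul_cancel₀ hcard, one_smul]
  have hvfix : ∀ k : K, ρ (inl k) v = v := by
    obtain ⟨y, hy, rfl⟩ := hv
    intro k; exact hrpi k y
  have hmu : ∀ (k : K) (w : V), ρ (inl k) (μ v w) = μ v (ρ (inl k) w) := by
    intro k w
    rw [← hequiv (inl k) v w, hvfix k]
  -- grading lemmas for W l
  have hWle : ∀ (l : L) (m : K ⋊[φ] L), m.right = l →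
      H m ≤ ⨆ k : K, H (inl k * inr l) := by
    intro l m hm
    have hmeq : m = inl m.left * inr l := by
      rw [← hm, ← mk_eq_inl_mul_inr]
    have := le_iSup (fun k : K => H (inl k * inr l)) m.left
    rw [← hmeq] at this
    exact this
  have hrightW : ∀ (k : K) (l : L), ((inl k * inr l : K ⋊[φ] L)).right = l := by
    intro k l; simp
  have hconjW : ∀ (g m : K ⋊[φ] L) (l : L), m.right = l → ((inl g.left)⁻¹ * m * inl g.left).right = l := by
    intro g m l hm; simp [hm]
  have hρW : ∀ (k : K) (l : L), ∀ y ∈ (⨆ j : K, H (inl j * inr l)),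
      ρ (inl k) y ∈ (⨆ j : K, H (inl j * inr l)) := by
    intro k l y hy
    refine Submodule.iSup_induction (motive := fun y => ρ (inl k) y ∈ ⨆ j : K, H (inl j * inr l))
      _ hy ?_ (by simp) ?_
    · intro j x hx
      have hg := hgrad (inl k) (inl j * inr l) x hx
      refine hWle l _ ?_ hg
      simp [← map_inv]
    · intro x z hx hz
      rw [map_add]; exact Submodule.add_mem _ hx hz
  have hWinv : ∀ (l : L), ∀ y ∈ (⨆ k : K, H (inl k * inr l)),
      πK y ∈ (⨆ k : K, H (inl k * inr l)) := by
    intro l y hy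
    rw [hπapp]
    exact Submodule.smul_mem _ _ (Submodule.sum_mem _ fun k _ => hρW k l y hy)
  -- graded projections
  let Qe : (K ⋊[φ] L) → (V →ₗ[ℚ] V) := fun m => gradedProj H D (· = m)
  let Ql : L → (V →ₗ[ℚ] V) := fun l => gradedProj H D (fun m => m.right = l)
  have hQlW : ∀ (l : L) (w : V), Ql l w ∈ ⨆ k : K, H (inl k * inr l) := by
    intro l w
    exact gradedProj_mem H D hdecomp _ _ (fun m hm => hWle l m hm) w
  have hQlid : ∀ (l : L), ∀ x ∈ (⨆ k : K, H (inl k * inr l)), Ql l x = x := by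
    intro l x hx
    refine Submodule.iSup_induction (motive := fun x => Ql l x = x) _ hx ?_ (by simp) ?_
    · intro k y hy
      show gradedProj H D _ y = y
      rw [gradedProj_apply_of_mem H D _ hy, if_pos (hrightW k l)]
    · intro y z hy hz
      rw [map_add, hy, hz]
  have hSfix : ∀ (l : L) (x : V), x ∈ Submodule.map πK (⨆ k : K, H (inl k * inr l)) →
      x ∈ (⨆ k : K, H (inl k * inr l)) ∧ πK x = x := by
    rintro l x ⟨y, hy, rfl⟩
    exact ⟨hWinv l y hy, hpipi y⟩
  -- reduction of traces on coinvariants to traces on V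
  have hred : ∀ (l : L) (f : V →ₗ[ℚ] V)
      (hf : ∀ x ∈ Submodule.map πK (⨆ k : K, H (inl k * inr l)),
        f x ∈ Submodule.map πK (⨆ k : K, H (inl k * inr l))),
      LinearMap.trace ℚ (Submodule.map πK (⨆ k : K, H (inl k * inr l))) (f.restrict hf)
        = LinearMap.trace ℚ V (f ∘ₗ πK ∘ₗ Ql l) := by
    intro l f hf
    have hall : ∀ w, (f ∘ₗ πK ∘ₗ Ql l) w ∈ Submodule.map πK (⨆ k : K, H (inl k * inr l)) :=
      fun w => hf _ (Submodule.mem_map_of_mem (hQlW l w))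
    rw [← trace_restrict_eq_trace _ _ hall (fun x _ => hall x)]
    congr 1
    ext ⟨x, hx⟩
    simp only [LinearMap.restrict_apply, LinearMap.comp_apply]
    obtain ⟨hxW, hxfix⟩ := hSfix l x hx
    rw [hQlid l x hxW, hxfix]
  -- expansion of trace over the averaging map
  have hexp : ∀ (l : L) (f : V →ₗ[ℚ] V),
      LinearMap.trace ℚ V (f ∘ₗ πK ∘ₗ Ql l)
        = c • ∑ k : K, LinearMap.trace ℚ V ((f ∘ₗ ρ (inl k)) ∘ₗ Ql l) := by
    intro l f
    have hmapeq : f ∘ₗ πK ∘ₗ Ql l = c • ∑ k : K, ((f ∘ₗ ρ (inl k)) ∘ₗ Ql l) := by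
      ext w
      simp only [LinearMap.comp_apply, LinearMap.smul_apply, LinearMap.sum_apply, hπapp,
        map_smul, map_sum]
    rw [hmapeq, map_smul, map_sum]
  -- Ql as a sum of single-grade projections
  have hQlsum : ∀ l : L, Ql l = ∑ k : K, Qe (inl k * inr l) := by
    intro l
    refine ext_graded H hdecomp ?_
    intro m x hx
    have hL : Ql l x = if m.right = l then x else 0 := gradedProj_apply_of_mem H D _ hx
    have hR : ∀ k : K, Qe (inl k * inr l) x = if m = inl k * inr l then x else 0 :=
      fun k => gradedProj_apply_of_mem H D _ hx
    rw [hL, LinearMap.coe_sum, Finset.sum_apply]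
    by_cases hm : m.right = l
    · rw [if_pos hm]
      have heq : m = inl m.left * inr l := by
        rw [← hm, ← mk_eq_inl_mul_inr]
      refine ((Finset.sum_eq_single_of_mem m.left (Finset.mem_univ _)
        fun k _ hk => ?_).trans ?_).symm
      · rw [hR k, if_neg]
        intro h
        apply hk
        have h2 := congrArg SemidirectProduct.left h
        simpa using h2.symm
      · rw [hR m.left, if_pos heq]
    · rw [if_neg hm]
      refine (Finset.sum_eq_zero fun k _ => ?_).symm
      rw [hR k, if_neg]
      intro h
      exact hm (by rw [h]; simp)
  -- the core pairwise lemma, from the trace axiom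
  have hCPL : ∀ (d : K ⋊[φ] L), ∀ u ∈ H d, ∀ x y : K ⋊[φ] L,
      LinearMap.trace ℚ V ((μ u ∘ₗ ρ y⁻¹) ∘ₗ Qe x)
        = LinearMap.trace ℚ V ((ρ x ∘ₗ μ u) ∘ₗ Qe y) := by
    intro d u hu x y
    by_cases hd : d * (y * x * y⁻¹) = x
    · have hmem1 : ∀ w ∈ H x, (μ u ∘ₗ ρ y⁻¹) w ∈ H x := by
        intro w hw
        have hg1 : ρ y⁻¹ w ∈ H (y * x * y⁻¹) := by
          have := hgrad y⁻¹ x w hw; rwa [inv_inv] at this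
        have := hmulgrad d _ u hu _ hg1
        rwa [hd] at this
      have hd'' : d = x * (y * x * y⁻¹)⁻¹ := eq_mul_inv_iff_mul_eq.mpr hd
      have hmem2 : ∀ w ∈ H y, (ρ x ∘ₗ μ u) w ∈ H y := by
        intro w hw
        have hg2 := hmulgrad d y u hu w hw
        have hg3 := hgrad x (d * y) _ hg2
        have he : x⁻¹ * (d * y) * x = y := by
          rw [hd'']; group
        rwa [he] at hg3
      have hu' : u ∈ H ⁅x, y⁆ := by
        have hd2 : d = ⁅x, y⁆ := by
          rw [commutatorElement_def, hd'']; group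
        rwa [hd2] at hu
      rw [trace_comp_proj_diag H D hdecomp _ x hmem1,
        trace_comp_proj_diag H D hdecomp _ y hmem2]
      exact htrace x y u hu' hmem1 hmem2
    · have hmemL : ∀ w ∈ H x, (μ u ∘ₗ ρ y⁻¹) w ∈ H (d * (y * x * y⁻¹)) := by
        intro w hw
        have hg1 : ρ y⁻¹ w ∈ H (y * x * y⁻¹) := by
          have := hgrad y⁻¹ x w hw; rwa [inv_inv] at this
        exact hmulgrad d _ u hu _ hg1
      have hmemR : ∀ w ∈ H y, (ρ x ∘ₗ μ u) w ∈ H (x⁻¹ * (d * y) * x) :=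
        fun w hw => hgrad x (d * y) _ (hmulgrad d y u hu w hw)
      have hne2 : x⁻¹ * (d * y) * x ≠ y := by
        intro hcon
        apply hd
        have hcon' : d * y = x * y * x⁻¹ := by
          have hx1 : x * (x⁻¹ * (d * y) * x) * x⁻¹ = x * y * x⁻¹ := by rw [hcon]
          simpa [mul_assoc] using hx1
        rw [show d * (y * x * y⁻¹) = (d * y) * x * y⁻¹ by group, hcon']
        group
      rw [trace_comp_proj_offdiag H D hdecomp _ x _ hmemL hd,
        trace_comp_proj_offdiag H D hdecomp _ y _ hmemR hne2]
  -- trace against Ql as a sum of traces against single projections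
  have htql : ∀ (T : V →ₗ[ℚ] V) (l : L),
      LinearMap.trace ℚ V (T ∘ₗ Ql l)
        = ∑ k : K, LinearMap.trace ℚ V (T ∘ₗ Qe (inl k * inr l)) := by
    intro T l
    rw [hQlsum l]
    have : T ∘ₗ (∑ k : K, Qe (inl k * inr l)) = ∑ k : K, T ∘ₗ Qe (inl k * inr l) := by
      ext w
      simp [LinearMap.sum_apply, LinearMap.comp_apply]
    rw [this, map_sum]
  -- the main claim, for all u in the [l₁,l₂]-graded sum
  have hmain : ∀ u ∈ (⨆ k : K, H (inl k * inr ⁅l₁, l₂⁆)),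
      (∑ k : K, LinearMap.trace ℚ V
        ((μ u ∘ₗ ρ ((inr l₂ : K ⋊[φ] L)⁻¹ * inl k)) ∘ₗ Ql l₁))
      = ∑ k : K, LinearMap.trace ℚ V
        ((ρ (inl k * inr l₁ : K ⋊[φ] L) ∘ₗ μ u) ∘ₗ Ql l₂) := by
    intro u hu
    refine Submodule.iSup_induction (motive := fun u =>
      (∑ k : K, LinearMap.trace ℚ V
        ((μ u ∘ₗ ρ ((inr l₂ : K ⋊[φ] L)⁻¹ * inl k)) ∘ₗ Ql l₁))
      = ∑ k : K, LinearMap.trace ℚ V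
        ((ρ (inl k * inr l₁ : K ⋊[φ] L) ∘ₗ μ u) ∘ₗ Ql l₂)) _ hu ?_ ?_ ?_
    · intro j u hu
      have hinv : ∀ k : K, (inr l₂ : K ⋊[φ] L)⁻¹ * inl k = (inl k⁻¹ * inr l₂)⁻¹ := by
        intro k
        rw [mul_inv_rev]
        simp [← map_inv]
      calc (∑ k : K, LinearMap.trace ℚ V
            ((μ u ∘ₗ ρ ((inr l₂ : K ⋊[φ] L)⁻¹ * inl k)) ∘ₗ Ql l₁))
          = ∑ k : K, ∑ j' : K, LinearMap.trace ℚ V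
            ((μ u ∘ₗ ρ ((inl k⁻¹ * inr l₂ : K ⋊[φ] L)⁻¹)) ∘ₗ Qe (inl j' * inr l₁)) := by
            refine Finset.sum_congr rfl fun k _ => ?_
            rw [hinv k, htql]
        _ = ∑ k : K, ∑ j' : K, LinearMap.trace ℚ V
            ((ρ (inl j' * inr l₁ : K ⋊[φ] L) ∘ₗ μ u) ∘ₗ Qe (inl k⁻¹ * inr l₂)) := by
            refine Finset.sum_congr rfl fun k _ => Finset.sum_congr rfl fun j' _ => ?_
            exact hCPL _ u hu (inl j' * inr l₁) (inl k⁻¹ * inr l₂)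
        _ = ∑ k : K, ∑ j' : K, LinearMap.trace ℚ V
            ((ρ (inl j' * inr l₁ : K ⋊[φ] L) ∘ₗ μ u) ∘ₗ Qe (inl k * inr l₂)) := by
            rw [← Equiv.sum_comp (Equiv.inv K) (fun k => ∑ j' : K, LinearMap.trace ℚ V
              ((ρ (inl j' * inr l₁ : K ⋊[φ] L) ∘ₗ μ u) ∘ₗ Qe (inl k * inr l₂)))]
            rfl
        _ = ∑ j' : K, ∑ k : K, LinearMap.trace ℚ V
            ((ρ (inl j' * inr l₁ : K ⋊[φ] L) ∘ₗ μ u) ∘ₗ Qe (inl k * inr l₂)) :=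
            Finset.sum_comm
        _ = ∑ k : K, LinearMap.trace ℚ V
            ((ρ (inl k * inr l₁ : K ⋊[φ] L) ∘ₗ μ u) ∘ₗ Ql l₂) := by
            refine Finset.sum_congr rfl fun j' _ => ?_
            rw [htql]
    · simp
    · intro y z hy hz
      simp only [map_add, LinearMap.add_comp, LinearMap.comp_add, Finset.sum_add_distrib]
      rw [hy, hz]
  -- final assembly
  have hvW : v ∈ ⨆ k : K, H (inl k * inr ⁅l₁, l₂⁆) := (hSfix ⁅l₁, l₂⁆ v hv).1
  rw [hred l₁ _ h₁, hred l₂ _ h₂, hexp l₁ _, hexp l₂ _]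
  congr 1
  have hoL : ∀ k : K, (((μ v).comp (ρ ((inr l₂ : K ⋊[φ] L)⁻¹)) ∘ₗ ρ (inl k)) ∘ₗ Ql l₁)
      = (μ v ∘ₗ ρ ((inr l₂ : K ⋊[φ] L)⁻¹ * inl k)) ∘ₗ Ql l₁ := by
    intro k
    ext w
    simp [LinearMap.comp_apply, map_mul, Module.End.mul_apply]
  have hlk : ∀ k : K, (inr l₁ : K ⋊[φ] L) * inl k = inl (φ l₁ k) * inr l₁ := by
    intro k
    rw [inl_aut, map_inv]
    group
  have hoR : ∀ k : K, (((ρ (inr l₁ : K ⋊[φ] L)).comp (μ v) ∘ₗ ρ (inl k)) ∘ₗ Ql l₂)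
      = (ρ (inl (φ l₁ k) * inr l₁ : K ⋊[φ] L) ∘ₗ μ v) ∘ₗ Ql l₂ := by
    intro k
    ext w
    simp only [LinearMap.comp_apply]
    rw [← hmu k, ← hlk k, map_mul, Module.End.mul_apply]
  refine Eq.trans (Finset.sum_congr rfl fun k _ => ?_) (Eq.trans (hmain v hvW) ?_)
  · exact congrArg (LinearMap.trace ℚ V) (hoL k)
  · exact (Fintype.sum_bijective (φ l₁) (φ l₁).bijective _ _
      (fun k => congrArg (LinearMap.trace ℚ V) (hoR k))).symm
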